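/- Let μ_1 > μ_2 > ... > μ_{n-1} > 0 be distinct positive reals and ω(x) = ∏_{i=1}^{n-1}(x - μ_i). Then for each 1 ≤ k ≤ n-1, the quantity (-1)^{k-1} ∑_{i=1}^{n-1} μ_i^{n-1-k}/(ω'(μ_i)·√μ_i) is strictly positive. -/

import Mathlib

open Polynomial Finset MeasureTheory Set

lemma my_integrable_inv_add_sq {a : ℝ} (ha : 0 < a) :
    IntegrableOn (fun t : ℝ => (a + t ^ 2)⁻¹) (Ioi 0) := by
  have hg : Integrable (fun t : ℝ => (min a 1)⁻¹ * (1 + t ^ 2)⁻¹) :=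
    integrable_inv_one_add_sq.const_mul _
  refine (hg.restrict (s := Ioi 0)).mono' ?_ ?_
  · exact ((Continuous.inv₀ (by continuity) (fun t => by positivity)).aestronglyMeasurable).restrict
  · refine Filter.Eventually.of_forall fun t => ?_
    have h1 : (0:ℝ) < min a 1 := lt_min ha one_pos
    rw [Real.norm_eq_abs, abs_of_nonneg (by positivity), ← mul_inv]
    gcongr
    nlinarith [min_le_left a 1, min_le_right a 1, sq_nonneg t]

lemma my_integral_inv_add_sq {a : ℝ} (ha : 0 < a) :
    ∫ t in Ioi (0:ℝ), (a + t ^ 2)⁻¹ = Real.pi / (2 * Real.sqrt a) := by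
  have hs : 0 < Real.sqrt a := Real.sqrt_pos.mpr ha
  have hsq : Real.sqrt a ^ 2 = a := Real.sq_sqrt ha.le
  have h1 : ∀ t : ℝ, (a + t ^ 2)⁻¹ = a⁻¹ * (1 + ((Real.sqrt a)⁻¹ * t) ^ 2)⁻¹ := by
    intro t
    have h2 : (0:ℝ) < a + t ^ 2 := by positivity
    rw [← hsq]
    field_simp
    rw [Real.sqrt_sq hs.le]; ring
  calc ∫ t in Ioi (0:ℝ), (a + t ^ 2)⁻¹
      = ∫ t in Ioi (0:ℝ), a⁻¹ * (1 + ((Real.sqrt a)⁻¹ * t) ^ 2)⁻¹ := by simp_rw [h1]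
    _ = a⁻¹ * ∫ t in Ioi (0:ℝ), (1 + ((Real.sqrt a)⁻¹ * t) ^ 2)⁻¹ := integral_const_mul _ _
    _ = a⁻¹ * (((Real.sqrt a)⁻¹)⁻¹ • ∫ t in Ioi ((Real.sqrt a)⁻¹ * 0), (1 + t ^ 2)⁻¹) := by
        rw [integral_comp_mul_left_Ioi (fun u => (1 + u ^ 2)⁻¹) 0 (inv_pos.mpr hs)]
    _ = Real.pi / (2 * Real.sqrt a) := by
        rw [mul_zero, integral_Ioi_inv_one_add_sq, Real.arctan_zero]
        rw [smul_eq_mul, inv_inv, ← hsq]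
        field_simp
        linear_combination Real.pi * Real.sq_sqrt (sq_nonneg (Real.sqrt a))

theorem lel_partial_derivative_pos (n : ℕ) (hn : 2 ≤ n) (μ : Fin (n - 1) → ℝ)
    (hdec : StrictAnti μ) (hpos : ∀ i, 0 < μ i) (k : ℕ) (hk1 : 1 ≤ k) (hk2 : k ≤ n - 1) :
    let ω : Polynomial ℝ := ∏ i : Fin (n - 1), (X - C (μ i))
    0 < (-1 : ℝ) ^ (k - 1) *
      ∑ i : Fin (n - 1), μ i ^ (n - 1 - k) / ((derivative ω).eval (μ i) * Real.sqrt (μ i)) := by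
  intro ω
  have hm1 : 1 ≤ n - 1 := hk1.trans hk2
  set d : ℕ := n - 1 - k with hd
  have hdlt : d < n - 1 := Nat.sub_lt (by omega) hk1
  have hinj : Function.Injective μ := hdec.injective
  have hInjOn : Set.InjOn μ (univ : Finset (Fin (n - 1))) :=
    Set.injOn_of_injective hinj
  set w : Fin (n - 1) → ℝ := fun i => ∏ j ∈ univ.erase i, (μ i - μ j) with hwdef
  have hw0 : ∀ i, w i ≠ 0 := by
    intro i
    rw [hwdef]
    refine prod_ne_zero_iff.mpr fun j hj => sub_ne_zero_of_ne ?_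
    exact fun h => (mem_erase.mp hj).1 (hinj h.symm)
  have hderiv : ∀ i, (derivative ω).eval (μ i) = w i := by
    intro i
    have hω : ω = Lagrange.nodal univ μ := (Lagrange.nodal_eq _ _).symm
    rw [hω, Lagrange.eval_nodal_derivative_eval_node_eq (mem_univ i), Lagrange.eval_nodal]
  have hmd : n - 1 - 1 = d + (k - 1) := by omega
  have hksq : ((-1:ℝ) ^ (k - 1)) * ((-1:ℝ) ^ (k - 1)) = 1 := by
    rw [← pow_add]; exact Even.neg_one_pow ⟨k - 1, rfl⟩
  -- key algebraic identity via Lagrange interpolation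
  have hdeg : (X ^ d : Polynomial ℝ).degree < (univ : Finset (Fin (n - 1))).card := by
    rw [degree_X_pow, card_univ, Fintype.card_fin]
    exact_mod_cast hdlt
  have hX := Lagrange.eq_interpolate (v := μ) hInjOn hdeg
  simp only [eval_pow, eval_X] at hX
  have key : ∀ t : ℝ, ∑ i, μ i ^ d * (w i)⁻¹ * (μ i + t ^ 2)⁻¹
      = (-1 : ℝ) ^ (k - 1) * ((t ^ 2) ^ d * (∏ j, (μ j + t ^ 2))⁻¹) := by
    intro t
    have hpt : ∀ j : Fin (n - 1), μ j + t ^ 2 ≠ 0 := fun j => by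
      have := hpos j; positivity
    have hP : (0 : ℝ) < ∏ j, (μ j + t ^ 2) := prod_pos fun j _ => by
      have := hpos j; positivity
    have h1 := congrArg (eval (-t ^ 2)) hX
    simp only [eval_pow, eval_X, Lagrange.interpolate_apply, eval_finset_sum, eval_mul, eval_C,
      Lagrange.basis, eval_prod, Lagrange.basisDivisor, eval_sub] at h1
    have h2 : ∀ i : Fin (n - 1), ∏ j ∈ univ.erase i, ((μ i - μ j)⁻¹ * (-t ^ 2 - μ j))
        = (w i)⁻¹ * ((-1 : ℝ) ^ (n - 1 - 1) * ((∏ j, (μ j + t ^ 2)) * (μ i + t ^ 2)⁻¹)) := by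
      intro i
      rw [prod_mul_distrib, ← prod_inv_distrib]
      congr 1
      have hstep : ∀ j ∈ univ.erase i, -t ^ 2 - μ j = -1 * (μ j + t ^ 2) := fun j _ => by ring
      rw [prod_congr rfl hstep, prod_mul_distrib, prod_const,
        card_erase_of_mem (mem_univ i), card_univ, Fintype.card_fin]
      congr 1
      rw [← Finset.mul_prod_erase univ (fun j => μ j + t ^ 2) (mem_univ i),
        mul_comm (μ i + t ^ 2), mul_assoc, mul_inv_cancel₀ (hpt i), mul_one]
    have h3 : ((-t ^ 2 : ℝ)) ^ d
        = (-1 : ℝ) ^ (n - 1 - 1) *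
          ((∏ j, (μ j + t ^ 2)) * ∑ i, μ i ^ d * (w i)⁻¹ * (μ i + t ^ 2)⁻¹) := by
      rw [h1, Finset.mul_sum, Finset.mul_sum]
      refine Finset.sum_congr rfl fun i _ => ?_
      rw [h2 i]; ring
    have hsq1 : ((-1 : ℝ) ^ (n - 1 - 1)) * ((-1 : ℝ) ^ (n - 1 - 1)) = 1 := by
      rw [← pow_add]; exact Even.neg_one_pow ⟨n - 1 - 1, rfl⟩
    have h5 : (∏ j, (μ j + t ^ 2)) * (∑ i, μ i ^ d * (w i)⁻¹ * (μ i + t ^ 2)⁻¹)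
        = (-1 : ℝ) ^ (n - 1 - 1) * (-t ^ 2) ^ d := by
      calc (∏ j, (μ j + t ^ 2)) * (∑ i, μ i ^ d * (w i)⁻¹ * (μ i + t ^ 2)⁻¹)
          = ((-1 : ℝ) ^ (n - 1 - 1) * (-1 : ℝ) ^ (n - 1 - 1)) *
            ((∏ j, (μ j + t ^ 2)) * ∑ i, μ i ^ d * (w i)⁻¹ * (μ i + t ^ 2)⁻¹) := by
            rw [hsq1, one_mul]
        _ = (-1 : ℝ) ^ (n - 1 - 1) * (-t ^ 2) ^ d := by rw [h3]; ring
    have hdsq : ((-1:ℝ) ^ d) * ((-1:ℝ) ^ d) = 1 := by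
      rw [← pow_add]; exact Even.neg_one_pow ⟨d, rfl⟩
    have h6 : (-1 : ℝ) ^ (n - 1 - 1) * (-t ^ 2) ^ d = (-1 : ℝ) ^ (k - 1) * (t ^ 2) ^ d := by
      rw [neg_pow, hmd, pow_add]
      linear_combination ((-1:ℝ) ^ (k - 1) * (t ^ 2) ^ d) * hdsq
    refine mul_left_cancel₀ hP.ne' ?_
    rw [h5, h6]
    field_simp
  -- analytic part
  have hint : ∀ i : Fin (n - 1), IntegrableOn (fun t : ℝ => (μ i + t ^ 2)⁻¹) (Ioi 0) :=
    fun i => my_integrable_inv_add_sq (hpos i)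
  have hintc : ∀ i : Fin (n - 1),
      IntegrableOn (fun t : ℝ => μ i ^ d * (w i)⁻¹ * (μ i + t ^ 2)⁻¹) (Ioi 0) :=
    fun i => (hint i).const_mul _
  have hG : IntegrableOn (fun t : ℝ => (t ^ 2) ^ d * (∏ j, (μ j + t ^ 2))⁻¹) (Ioi 0) := by
    have hsum : IntegrableOn
        (fun t : ℝ => ∑ i, μ i ^ d * (w i)⁻¹ * (μ i + t ^ 2)⁻¹) (Ioi 0) :=
      integrable_finset_sum _ (fun i _ => hintc i)
    have hfun : (fun t : ℝ => (t ^ 2) ^ d * (∏ j, (μ j + t ^ 2))⁻¹)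
        = fun t : ℝ => (-1:ℝ) ^ (k - 1) * ∑ i, μ i ^ d * (w i)⁻¹ * (μ i + t ^ 2)⁻¹ := by
      funext t
      rw [key t, ← mul_assoc, hksq, one_mul]
    rw [hfun]
    exact hsum.const_mul _
  have hGpos : 0 < ∫ t in Ioi (0:ℝ), (t ^ 2) ^ d * (∏ j, (μ j + t ^ 2))⁻¹ := by
    have hnn : 0 ≤ᵐ[volume.restrict (Ioi (0:ℝ))]
        fun t : ℝ => (t ^ 2) ^ d * (∏ j, (μ j + t ^ 2))⁻¹ := by
      refine Filter.Eventually.of_forall fun t => ?_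
      have hP : (0 : ℝ) < ∏ j, (μ j + t ^ 2) := prod_pos fun j _ => by
        have := hpos j; positivity
      exact mul_nonneg (by positivity) (inv_nonneg.mpr hP.le)
    rw [setIntegral_pos_iff_support_of_nonneg_ae hnn hG]
    refine lt_of_lt_of_le ?_ (measure_mono (fun t ht => ⟨?_, ht⟩))
    · simp [Real.volume_Ioi]
    · have ht0 : (0:ℝ) < t := ht
      have hP : (0 : ℝ) < ∏ j, (μ j + t ^ 2) := prod_pos fun j _ => by
        have := hpos j; positivity
      have : (0:ℝ) < (t ^ 2) ^ d * (∏ j, (μ j + t ^ 2))⁻¹ :=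
        mul_pos (by positivity) (inv_pos.mpr hP)
      exact Function.mem_support.mpr this.ne'
  have hsqrt : ∀ i, (Real.sqrt (μ i))⁻¹
      = (2 / Real.pi) * ∫ t in Ioi (0:ℝ), (μ i + t ^ 2)⁻¹ := by
    intro i
    rw [my_integral_inv_add_sq (hpos i)]
    have hsp : 0 < Real.sqrt (μ i) := Real.sqrt_pos.mpr (hpos i)
    have hpi : (0:ℝ) < Real.pi := Real.pi_pos
    field_simp
  have hsum_eq : ∑ i, μ i ^ d / (w i * Real.sqrt (μ i))
      = (2 / Real.pi) * ((-1:ℝ) ^ (k - 1) *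
        ∫ t in Ioi (0:ℝ), (t ^ 2) ^ d * (∏ j, (μ j + t ^ 2))⁻¹) := by
    calc ∑ i, μ i ^ d / (w i * Real.sqrt (μ i))
        = ∑ i, (2 / Real.pi) * (μ i ^ d * (w i)⁻¹ * ∫ t in Ioi (0:ℝ), (μ i + t ^ 2)⁻¹) := by
          refine Finset.sum_congr rfl fun i _ => ?_
          rw [div_eq_mul_inv, mul_inv, ← mul_assoc, mul_assoc, hsqrt i]
          ring
      _ = (2 / Real.pi) * ∑ i, ∫ t in Ioi (0:ℝ), μ i ^ d * (w i)⁻¹ * (μ i + t ^ 2)⁻¹ := by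
          rw [← Finset.mul_sum]
          congr 1
          refine Finset.sum_congr rfl fun i _ => ?_
          rw [integral_const_mul]
      _ = (2 / Real.pi) * ∫ t in Ioi (0:ℝ), ∑ i, μ i ^ d * (w i)⁻¹ * (μ i + t ^ 2)⁻¹ := by
          rw [integral_finset_sum _ (fun i _ => hintc i)]
      _ = (2 / Real.pi) * ∫ t in Ioi (0:ℝ),
            (-1:ℝ) ^ (k - 1) * ((t ^ 2) ^ d * (∏ j, (μ j + t ^ 2))⁻¹) := by
          congr 1
          exact integral_congr_ae (Filter.Eventually.of_forall fun t => key t)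
      _ = (2 / Real.pi) * ((-1:ℝ) ^ (k - 1) *
            ∫ t in Ioi (0:ℝ), (t ^ 2) ^ d * (∏ j, (μ j + t ^ 2))⁻¹) := by
          rw [integral_const_mul]
  have hrw : (∑ i : Fin (n - 1), μ i ^ (n - 1 - k) /
        ((derivative ω).eval (μ i) * Real.sqrt (μ i)))
      = ∑ i, μ i ^ d / (w i * Real.sqrt (μ i)) :=
    Finset.sum_congr rfl fun i _ => by rw [hderiv i]
  rw [hrw, hsum_eq]
  have hpi : (0:ℝ) < Real.pi := Real.pi_pos
  set I := ∫ t in Ioi (0:ℝ), (t ^ 2) ^ d * (∏ j, (μ j + t ^ 2))⁻¹ with hI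
  have hfin : (-1:ℝ) ^ (k - 1) * ((2 / Real.pi) * ((-1:ℝ) ^ (k - 1) * I))
      = (2 / Real.pi) * I := by
    linear_combination ((2 / Real.pi) * I) * hksq
  rw [hfin]
  exact mul_pos (by positivity) hGpos
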